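/- Let f : ℝ^m → ℝ be C² with |∇f| < 1, set φ = (1 − |∇f|²)^{-1/2}, and let H = (1/m)·tr_g(φ ∇²f) be the mean curvature of the graph of f, where g_{ij} = δ_{ij} − f_i f_j. Suppose ∇f restricted to the set Σ⁺ = {∇²f ≥ 0} is surjective onto the unit ball B^m. Then ∫_{ℝ^m} |H|^m φ^{-m-2} dx ≥ |B^m|. -/

import Mathlib

open MeasureTheory

/-- The Hessian matrix of `f : ℝ^m → ℝ` at `x`. -/
noncomputable def hessianMatrix {m : ℕ} (f : EuclideanSpace ℝ (Fin m) → ℝ)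
    (x : EuclideanSpace ℝ (Fin m)) : Matrix (Fin m) (Fin m) ℝ :=
  fun i j => fderiv ℝ (gradient f) x (EuclideanSpace.single j 1) i

/-- The induced metric `g_{ij} = δ_{ij} - f_i f_j` on the spacelike graph of `f`. -/
noncomputable def graphMetric {m : ℕ} (f : EuclideanSpace ℝ (Fin m) → ℝ)
    (x : EuclideanSpace ℝ (Fin m)) : Matrix (Fin m) (Fin m) ℝ :=
  1 - Matrix.vecMulVec (fun i => gradient f x i) (fun i => gradient f x i)

/-- The tilt function `φ = (1 - ‖∇f‖²)^{-1/2}`. -/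
noncomputable def tiltFn {m : ℕ} (f : EuclideanSpace ℝ (Fin m) → ℝ)
    (x : EuclideanSpace ℝ (Fin m)) : ℝ :=
  (1 - ‖gradient f x‖ ^ 2) ^ (-(1 : ℝ) / 2)

/-- The mean curvature `H = (1/m) tr_g(φ ∇²f)` of the spacelike graph of `f`. -/
noncomputable def meanCurvFn {m : ℕ} (f : EuclideanSpace ℝ (Fin m) → ℝ)
    (x : EuclideanSpace ℝ (Fin m)) : ℝ :=
  (1 / m) * ((graphMetric f x)⁻¹ * (tiltFn f x • hessianMatrix f x)).trace

section AuxLemmas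

lemma psd_smul' {n : Type*} [Fintype n] {c : ℝ} (hc : 0 ≤ c) {A : Matrix n n ℝ}
    (hA : A.PosSemidef) : (c • A).PosSemidef := by
  refine Matrix.PosSemidef.of_dotProduct_mulVec_nonneg ?_ fun x => ?_
  · unfold Matrix.IsHermitian
    rw [Matrix.conjTranspose_smul, hA.1.eq]
    simp
  · rw [Matrix.smul_mulVec, dotProduct_smul]
    exact mul_nonneg hc (hA.dotProduct_mulVec_nonneg x)

lemma trace_eq_sum_eigenvalues' {n : Type*} [Fintype n] [DecidableEq n] {A : Matrix n n ℝ}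
    (hA : A.IsHermitian) : A.trace = ∑ i, hA.eigenvalues i := by
  simpa using hA.trace_eq_sum_eigenvalues

lemma psd_det_nonneg' {n : Type*} [Fintype n] [DecidableEq n] {A : Matrix n n ℝ}
    (hA : A.PosSemidef) : 0 ≤ A.det := by
  rw [hA.1.det_eq_prod_eigenvalues]
  exact Finset.prod_nonneg fun i _ => by simpa using hA.eigenvalues_nonneg i

lemma psd_det_le_trace_pow' {m : ℕ} {N : Matrix (Fin m) (Fin m) ℝ} (hN : N.PosSemidef) :
    N.det ≤ (N.trace / m) ^ m := by
  rcases Nat.eq_zero_or_pos m with rfl | hm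
  · simp [Matrix.det_fin_zero]
  have hmR : (0 : ℝ) < m := by exact_mod_cast hm
  have hnn : ∀ i, (0:ℝ) ≤ hN.1.eigenvalues i := fun i => by
    simpa using hN.eigenvalues_nonneg i
  have hdet : N.det = ∏ i, hN.1.eigenvalues i := by
    rw [hN.1.det_eq_prod_eigenvalues]; simp
  have htr : N.trace = ∑ i, hN.1.eigenvalues i := trace_eq_sum_eigenvalues' hN.1
  have hAM : ∏ i, (hN.1.eigenvalues i) ^ ((m : ℝ)⁻¹) ≤ ∑ i, (m : ℝ)⁻¹ * hN.1.eigenvalues i :=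
    Real.geom_mean_le_arith_mean_weighted Finset.univ _ _
      (fun i _ => by positivity) (by simp [Finset.card_univ]; field_simp) (fun i _ => hnn i)
  have h1 : ∏ i, (hN.1.eigenvalues i) ^ ((m : ℝ)⁻¹) = (∏ i, hN.1.eigenvalues i) ^ ((m : ℝ)⁻¹) :=
    Real.finset_prod_rpow _ _ (fun i _ => hnn i) _
  have h2 : ∑ i, (m : ℝ)⁻¹ * hN.1.eigenvalues i = N.trace / m := by
    rw [htr, ← Finset.mul_sum]; ring
  have hprod : (0:ℝ) ≤ ∏ i, hN.1.eigenvalues i := Finset.prod_nonneg fun i _ => hnn i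
  have key : (∏ i, hN.1.eigenvalues i) ^ ((m : ℝ)⁻¹) ≤ N.trace / m := by
    rw [← h1, ← h2]; exact hAM
  calc N.det = ((∏ i, hN.1.eigenvalues i) ^ ((m : ℝ)⁻¹)) ^ m := by
        rw [hdet, ← Real.rpow_natCast ((∏ i, hN.1.eigenvalues i) ^ ((m : ℝ)⁻¹)) m,
          ← Real.rpow_mul hprod, inv_mul_cancel₀ (ne_of_gt hmR), Real.rpow_one]
    _ ≤ (N.trace / m) ^ m :=
        pow_le_pow_left₀ (Real.rpow_nonneg hprod _) key m

end AuxLemmas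

set_option maxHeartbeats 1000000 in
open Matrix in
lemma pointwise_det_le {m : ℕ} (f : EuclideanSpace ℝ (Fin m) → ℝ) (x : EuclideanSpace ℝ (Fin m))
    (hg : ‖gradient f x‖ < 1) (hA : (hessianMatrix f x).PosSemidef) :
    (hessianMatrix f x).det ≤ |meanCurvFn f x| ^ m * tiltFn f x ^ (-(m : ℝ) - 2) := by
  classical
  set p := gradient f x with hp
  set A := hessianMatrix f x with hA'
  set q : Fin m → ℝ := fun i => p i with hq
  have hnorm : ‖p‖ ^ 2 = q ⬝ᵥ q := by
    rw [EuclideanSpace.norm_eq, Real.sq_sqrt (by positivity)]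
    simp [dotProduct, hq, sq, Real.norm_eq_abs, abs_mul_abs_self]
  rcases Nat.eq_zero_or_pos m with hm | hm
  · subst hm
    have hnp : ‖p‖ = 0 := by rw [EuclideanSpace.norm_eq]; simp
    have : tiltFn f x = 1 := by
      rw [tiltFn, ← hp, hnp]
      norm_num
    rw [Matrix.det_fin_zero, pow_zero, this, Real.one_rpow, mul_one]
  -- main case
  set c : ℝ := 1 - ‖p‖ ^ 2 with hc'
  have hc : 0 < c := by nlinarith [norm_nonneg p]
  set φ : ℝ := tiltFn f x with hφ'
  have htilt : φ = c ^ (-(1:ℝ)/2) := rfl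
  have hφpos : 0 < φ := by rw [htilt]; exact Real.rpow_pos_of_pos hc _
  have hφ2 : φ ^ 2 = c⁻¹ := by
    rw [htilt, ← Real.rpow_natCast (c ^ (-(1:ℝ)/2)) 2, ← Real.rpow_mul hc.le]
    norm_num [Real.rpow_neg_one]
  set P := Matrix.vecMulVec q q with hP'
  have hqq : q ⬝ᵥ q = 1 - c := by rw [hc', ← hnorm]; ring
  have hPP : P * P = (1 - c) • P := by
    rw [← hqq]
    ext i j
    rw [Matrix.mul_apply, Matrix.smul_apply]
    simp only [hP', Matrix.vecMulVec_apply, smul_eq_mul, dotProduct]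
    rw [Finset.sum_mul]
    exact Finset.sum_congr rfl fun k _ => by ring
  have hPpsd : P.PosSemidef := by
    refine Matrix.PosSemidef.of_dotProduct_mulVec_nonneg ?_ ?_
    · ext i j
      simp [hP', Matrix.conjTranspose_apply, Matrix.vecMulVec_apply, mul_comm]
    · intro v
      have hqv : dotProduct (star v) (P *ᵥ v) = (∑ i, q i * v i) * (∑ j, q j * v j) := by
        rw [Finset.sum_mul_sum]
        simp only [dotProduct, Matrix.mulVec, hP', Matrix.vecMulVec_apply, star_trivial,
          Finset.mul_sum]
        exact Finset.sum_congr rfl fun i _ => Finset.sum_congr rfl fun j _ => by ring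
      rw [hqv]
      exact mul_self_nonneg _
  set g := graphMetric f x with hg'
  have hgdef : g = 1 - P := rfl
  have hright : g * (1 + c⁻¹ • P) = 1 := by
    have h1 : c⁻¹ * (1 - c) = c⁻¹ - 1 := by field_simp
    rw [hgdef, sub_mul, one_mul, mul_add, mul_one, Matrix.mul_smul, hPP, smul_smul, h1, sub_smul,
      one_smul]
    abel
  have hginv : g⁻¹ = 1 + c⁻¹ • P := Matrix.inv_eq_right_inv hright
  have hdetg : (g⁻¹).det = c⁻¹ := by
    have hvv : c⁻¹ • P = Matrix.vecMulVec (c⁻¹ • q) q := by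
      ext i j
      simp only [hP', Matrix.smul_apply, Matrix.vecMulVec_apply, Pi.smul_apply, smul_eq_mul]
      ring
    rw [hginv, hvv, Matrix.vecMulVec_eq (Fin 1), Matrix.det_one_add_replicateCol_mul_replicateRow,
      dotProduct_smul, hqq]
    simp only [smul_eq_mul]
    field_simp
    ring
  have hginvpsd : (g⁻¹).PosSemidef := by
    rw [hginv]
    exact Matrix.PosSemidef.one.add (psd_smul' (by positivity) hPpsd)
  obtain ⟨B, hBB, hBh⟩ : ∃ B : Matrix (Fin m) (Fin m) ℝ, B * B = g⁻¹ ∧ Bᴴ = B := by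
    open scoped MatrixOrder in
    exact ⟨CFC.sqrt (g⁻¹), CFC.sqrt_mul_sqrt_self _ hginvpsd.nonneg,
      (CFC.sqrt_nonneg _).posSemidef.1⟩
  set C := φ • A with hC'
  have hCpsd : C.PosSemidef := psd_smul' hφpos.le hA
  have hNpsd : (B * C * B).PosSemidef := by
    have h := hCpsd.mul_mul_conjTranspose_same B
    rwa [hBh] at h
  have htrN : (B * C * B).trace = (g⁻¹ * C).trace := by
    calc (B * C * B).trace = (B * (B * C)).trace := Matrix.trace_mul_comm _ _
      _ = (g⁻¹ * C).trace := by rw [← mul_assoc, hBB]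
  have hdetN : (B * C * B).det = (g⁻¹ * C).det := by
    rw [Matrix.det_mul, Matrix.det_mul, Matrix.det_mul, ← hBB, Matrix.det_mul]
    ring
  have hH : meanCurvFn f x = (g⁻¹ * C).trace / m := by
    rw [meanCurvFn, ← hg', ← hφ', ← hA', ← hC']
    ring
  have htrnn : 0 ≤ (B * C * B).trace := by
    rw [trace_eq_sum_eigenvalues' hNpsd.1]
    exact Finset.sum_nonneg fun i _ => by simpa using hNpsd.eigenvalues_nonneg i
  have hHnn : 0 ≤ meanCurvFn f x := by
    rw [hH, ← htrN]
    positivity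
  have hkey : c⁻¹ * (φ ^ m * A.det) ≤ |meanCurvFn f x| ^ m := by
    have hdetM : (g⁻¹ * C).det = c⁻¹ * (φ ^ m * A.det) := by
      rw [Matrix.det_mul, hdetg, hC', Matrix.det_smul]
      simp [Fintype.card_fin]
    rw [abs_of_nonneg hHnn, hH, ← htrN]
    calc c⁻¹ * (φ ^ m * A.det) = (B * C * B).det := by rw [hdetN, hdetM]
      _ ≤ ((B * C * B).trace / m) ^ m := psd_det_le_trace_pow' hNpsd
  have hφm : φ ^ (-(m:ℝ) - 2) = (φ ^ m * c⁻¹)⁻¹ := by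
    have he : (-(m:ℝ) - 2) = -(((m + 2 : ℕ) : ℝ)) := by push_cast; ring
    rw [he, Real.rpow_neg hφpos.le, Real.rpow_natCast]
    rw [pow_add, hφ2]
  rw [hφm]
  have hKpos : 0 < φ ^ m * c⁻¹ := by positivity
  rw [← div_eq_mul_inv, le_div_iff₀ hKpos]
  calc A.det * (φ ^ m * c⁻¹) = c⁻¹ * (φ ^ m * A.det) := by ring
    _ ≤ |meanCurvFn f x| ^ m := hkey

open Matrix in
/-- Willmore-type inequality in Cartesian coordinates: if `f` is `C²` spacelike and
the gradient map restricted to `Σ⁺ = {∇²f ≥ 0}` is onto the unit ball, then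
`∫ |H|^m φ^{-m-2} dx ≥ |B^m|`. -/
theorem willmore_inequality_cartesian {m : ℕ}
    (f : EuclideanSpace ℝ (Fin m) → ℝ)
    (hf : ContDiff ℝ 2 f)
    (hgrad : ∀ x, ‖gradient f x‖ < 1)
    (hsurj : ∀ p : EuclideanSpace ℝ (Fin m), ‖p‖ < 1 →
      ∃ y, (hessianMatrix f y).PosSemidef ∧ gradient f y = p) :
    volume (Metric.ball (0 : EuclideanSpace ℝ (Fin m)) 1) ≤
      ∫⁻ x, ENNReal.ofReal (|meanCurvFn f x| ^ m * tiltFn f x ^ (-(m : ℝ) - 2)) := by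
  classical
  have hgrad1 : ContDiff ℝ 1 (gradient f) := by
    have h2 : ContDiff ℝ 1 (fderiv ℝ f) := hf.fderiv_right (by norm_num)
    exact ((InnerProductSpace.toDual ℝ (EuclideanSpace ℝ (Fin m))).symm.contDiff).comp h2
  have hdiff : Differentiable ℝ (gradient f) := hgrad1.differentiable one_ne_zero
  have hcont : Continuous fun y => hessianMatrix f y := by
    have h1 : Continuous (fderiv ℝ (gradient f)) := hgrad1.continuous_fderiv one_ne_zero
    refine continuous_matrix fun i j => ?_
    exact (EuclideanSpace.proj i).continuous.comp (h1.clm_apply continuous_const)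
  have hcl : IsClosed {A : Matrix (Fin m) (Fin m) ℝ | A.PosSemidef} := by
    have heq : {A : Matrix (Fin m) (Fin m) ℝ | A.PosSemidef}
        = {A : Matrix (Fin m) (Fin m) ℝ | Aᴴ = A} ∩
          ⋂ v : Fin m → ℝ, {A | 0 ≤ dotProduct (star v) (A *ᵥ v)} := by
      ext A
      simp only [Set.mem_setOf_eq, Set.mem_inter_iff, Set.mem_iInter]
      exact Matrix.posSemidef_iff_dotProduct_mulVec
    rw [heq]
    refine (isClosed_eq (continuous_id.matrix_conjTranspose) continuous_id).inter
      (isClosed_iInter fun v => isClosed_le continuous_const ?_)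
    exact continuous_const.dotProduct (continuous_id.matrix_mulVec continuous_const)
  set s := {y | (hessianMatrix f y).PosSemidef} with hs'
  have hsM : MeasurableSet s := (hcl.preimage hcont).measurableSet
  have hdet_eq : ∀ y, (fderiv ℝ (gradient f) y).det = (hessianMatrix f y).det := by
    intro y
    have hmat : hessianMatrix f y = LinearMap.toMatrix
        (EuclideanSpace.basisFun (Fin m) ℝ).toBasis (EuclideanSpace.basisFun (Fin m) ℝ).toBasis
        (fderiv ℝ (gradient f) y : EuclideanSpace ℝ (Fin m) →ₗ[ℝ] EuclideanSpace ℝ (Fin m)) := by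
      ext i j
      simp [hessianMatrix, LinearMap.toMatrix_apply, OrthonormalBasis.coe_toBasis_repr_apply,
        OrthonormalBasis.coe_toBasis, EuclideanSpace.basisFun_apply, EuclideanSpace.basisFun_repr]
    rw [hmat, LinearMap.det_toMatrix]
  have hsub : Metric.ball (0 : EuclideanSpace ℝ (Fin m)) 1 ⊆ gradient f '' s := by
    intro p hp
    rcases hsurj p (by simpa [mem_ball_zero_iff] using hp) with ⟨y, hy1, hy2⟩
    exact ⟨y, hy1, hy2⟩
  calc volume (Metric.ball (0 : EuclideanSpace ℝ (Fin m)) 1)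
      ≤ volume (gradient f '' s) := measure_mono hsub
    _ ≤ ∫⁻ y in s, ENNReal.ofReal |(fderiv ℝ (gradient f) y).det| :=
        addHaar_image_le_lintegral_abs_det_fderiv volume hsM
          (fun y _ => ((hdiff y).hasFDerivAt).hasFDerivWithinAt)
    _ ≤ ∫⁻ y in s, ENNReal.ofReal (|meanCurvFn f y| ^ m * tiltFn f y ^ (-(m : ℝ) - 2)) := by
        refine setLIntegral_mono' hsM fun y hy => ?_
        refine ENNReal.ofReal_le_ofReal ?_
        rw [hdet_eq y, abs_of_nonneg (psd_det_nonneg' hy)]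
        exact pointwise_det_le f y (hgrad y) hy
    _ ≤ ∫⁻ y, ENNReal.ofReal (|meanCurvFn f y| ^ m * tiltFn f y ^ (-(m : ℝ) - 2)) :=
        setLIntegral_le_lintegral _ _
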